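/- Let E be a strongly connected finite directed graph with no sources and n ≥ 1. Two vertices v, w of E lie in the same connected component of E(n) if and only if v ∼_n w, i.e. there is a path from w to v of length divisible by gcd(P_E, n). Moreover each component of E(n) is strongly connected, so E(n) is strongly connected if and only if gcd(P_E, n) = 1. -/

import Mathlib

/-- A directed graph: vertices, edges, range and source maps. -/
structure DGraph where
  V : Type
  E : Type
  r : E → V
  s : E → V

namespace DGraph

variable {G : DGraph}

/-- A path in a directed graph: a word of composable edges together with a source vertex
(so that length-zero paths are vertices). -/
structure Path (G : DGraph) where
  src : G.V
  edges : List G.E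
  chain : List.Chain' (fun a b => G.s a = G.r b) edges
  srcEq : ∀ a ∈ edges.getLast?, G.s a = src

/-- The range of a path. -/
def Path.rng (p : G.Path) : G.V := p.edges.head?.elim p.src G.r

/-- The length of a path. -/
def Path.length (p : G.Path) : ℕ := p.edges.length

/-- The length-zero path at a vertex. -/
def Path.nil (G : DGraph) (v : G.V) : G.Path :=
  ⟨v, [], List.isChain_nil, by simp⟩

@[simp] theorem Path.length_nil (v : G.V) : (Path.nil G v).length = 0 := rfl

/-- Prepend an edge to a path. -/
def Path.cons (e : G.E) (p : G.Path) (h : p.rng = G.s e) : G.Path where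
  src := p.src
  edges := e :: p.edges
  chain := by
    unfold List.Chain'
    rw [List.isChain_cons]
    refine ⟨fun b hb => ?_, p.chain⟩
    rw [← h]
    simp [Path.rng, Option.mem_def.mp hb]
  srcEq := by
    intro a ha
    cases hp : p.edges with
    | nil =>
      rw [hp] at ha
      simp only [List.getLast?_singleton, Option.mem_def, Option.some.injEq] at ha
      subst ha
      have h0 : p.rng = p.src := by simp [Path.rng, hp]
      rw [← h, h0]
    | cons f t =>
      apply p.srcEq
      rw [hp]
      rw [hp, List.getLast?_cons_cons] at ha
      exact ha

@[simp] theorem Path.length_cons (e : G.E) (p : G.Path) (h : p.rng = G.s e) :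
    (Path.cons e p h).length = p.length + 1 := rfl

/-- Remove the first edge of a path. -/
def Path.tail (p : G.Path) : G.Path where
  src := p.src
  edges := p.edges.tail
  chain := p.chain.tail
  srcEq := by
    intro a ha
    apply p.srcEq
    cases hp : p.edges with
    | nil => rw [hp] at ha; simp at ha
    | cons f t =>
      rw [hp] at ha
      simp only [List.tail_cons] at ha
      cases t with
      | nil => simp at ha
      | cons g u => rw [List.getLast?_cons_cons]; exact ha

@[simp] theorem Path.length_tail (p : G.Path) : p.tail.length = p.length - 1 := by
  simp [Path.tail, Path.length]

/-- The initial segment of a path consisting of its first `k` edges. -/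
def Path.take (p : G.Path) (k : ℕ) : G.Path where
  src := (p.edges.drop k).head?.elim p.src G.r
  edges := p.edges.take k
  chain := p.chain.take k
  srcEq := by
    intro a ha
    have hc : List.Chain' (fun a b => G.s a = G.r b) (p.edges.take k ++ p.edges.drop k) := by
      rw [List.take_append_drop]; exact p.chain
    unfold List.Chain' at hc
    rw [List.isChain_append] at hc
    obtain ⟨-, -, hadj⟩ := hc
    cases hd : p.edges.drop k with
    | nil =>
      have htake : p.edges.take k = p.edges := by
        have h1 := List.take_append_drop k p.edges
        rw [hd, List.append_nil] at h1
        exact h1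
      simp only [List.head?_nil, Option.elim]
      exact p.srcEq a (htake ▸ ha)
    | cons f t =>
      simp only [List.head?_cons, Option.elim]
      exact hadj a ha f (by rw [hd]; simp)

/-- `[μ]_n` : the initial segment of `μ` of length `|μ| mod n`. -/
def Path.trunc (m : ℕ) (p : G.Path) : G.Path := p.take (p.length % m)

/-- Concatenation of paths, `p` followed after `q` (so `p.append q` has range the range of `p`
and source the source of `q`). -/
def Path.append (p q : G.Path) (h : p.src = q.rng) : G.Path where
  src := q.src
  edges := p.edges ++ q.edges
  chain := by
    unfold List.Chain'
    rw [List.isChain_append]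
    refine ⟨p.chain, q.chain, fun a ha b hb => ?_⟩
    rw [p.srcEq a ha, h]
    simp [Path.rng, Option.mem_def.mp hb]
  srcEq := by
    intro a ha
    cases hq : q.edges with
    | nil =>
      rw [hq, List.append_nil] at ha
      have h0 : q.rng = q.src := by simp [Path.rng, hq]
      rw [p.srcEq a ha, h, h0]
    | cons f t =>
      apply q.srcEq
      rw [hq]
      rw [hq, List.getLast?_append_cons] at ha
      exact ha

/-- A graph is row-finite if every vertex receives finitely many edges. -/
def RowFinite (G : DGraph) : Prop := ∀ v : G.V, {e : G.E | G.r e = v}.Finite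

/-- A graph has no sources if every vertex receives an edge. -/
def NoSources (G : DGraph) : Prop := ∀ v : G.V, ∃ e : G.E, G.r e = v

/-- A graph is strongly connected if for all vertices `v, w` there is a path from `w` to `v`. -/
def StronglyConnected (G : DGraph) : Prop :=
  ∀ v w : G.V, ∃ p : G.Path, p.src = w ∧ p.rng = v

/-- The set of paths of length less than `n`. -/
abbrev PathLt (G : DGraph) (n : ℕ) := {p : G.Path // p.length < n}

/-- The graph `E(n)` of Kribs and Solel: vertices are paths of length `< n`, and edges
are pairs `(e, μ)` with `r(μ) = s(e)` and `|μ| < n`, with source `μ` and range `[eμ]_n`. -/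
def Eln (G : DGraph) (n : ℕ) : DGraph where
  V := PathLt G n
  E := {q : G.E × G.Path // q.2.length + 1 ≤ n ∧ q.2.rng = G.s q.1}
  s := fun q => ⟨q.1.2, Nat.lt_of_succ_le q.2.1⟩
  r := fun q =>
    if h : q.1.2.length + 1 < n then
      ⟨Path.cons q.1.1 q.1.2 q.2.2, by simpa using h⟩
    else
      ⟨Path.nil G (G.r q.1.1), Nat.lt_of_lt_of_le (Nat.succ_pos _) q.2.1⟩

/-- A vertex of `E`, regarded as a length-zero vertex of `E(n)`. -/
def vtx (G : DGraph) (n : ℕ) (hn : 0 < n) (v : G.V) : PathLt G n :=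
  ⟨Path.nil G v, by simpa using hn⟩

/-- `d` is the greatest common divisor of the set `S` of natural numbers. -/
def IsGCDOf (d : ℕ) (S : Set ℕ) : Prop :=
  (∀ k ∈ S, d ∣ k) ∧ ∀ c : ℕ, (∀ k ∈ S, c ∣ k) → c ∣ d

/-- The set of lengths of (nonempty) cycles of `G`. -/
def CycleLengths (G : DGraph) : Set ℕ :=
  {k | ∃ p : G.Path, p.rng = p.src ∧ p.edges ≠ [] ∧ p.length = k}

/-- The set of lengths of (nonempty) cycles of `G` based at `v`. -/
def CycleLengthsAt (G : DGraph) (v : G.V) : Set ℕ :=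
  {k | ∃ p : G.Path, p.src = v ∧ p.rng = v ∧ p.edges ≠ [] ∧ p.length = k}

/-- The relation `v ∼ w` iff there is a path from `w` to `v` whose length is divisible by `d`. -/
def SimRel (G : DGraph) (d : ℕ) (v w : G.V) : Prop :=
  ∃ p : G.Path, p.src = w ∧ p.rng = v ∧ d ∣ p.length

/-- The connected-component relation of a graph: the smallest equivalence relation
identifying the range and the source of each edge. -/
def Comp (G : DGraph) : G.V → G.V → Prop :=
  Relation.EqvGen (fun a b => ∃ f : G.E, G.r f = a ∧ G.s f = b)

/-- The adjacency matrix of `E(n)` acting on vectors indexed by `E^{<n}`. -/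
noncomputable def Aact (G : DGraph) (n : ℕ) (g : PathLt G n → ℝ) (v : PathLt G n) : ℝ :=
  ∑ᶠ (f : (Eln G n).E) (_ : (Eln G n).r f = v), g ((Eln G n).s f)

/-- The pushforward of a vector on `E^{<n}` along `ν ↦ [ν]_m`. -/
noncomputable def pushf (G : DGraph) (n m : ℕ) (g : PathLt G n → ℝ) (μ : PathLt G m) : ℝ :=
  ∑ᶠ (ν : PathLt G n) (_ : Path.trunc m ν.1 = μ.1), g ν

instance : TopologicalSpace G.Path := ⊥

/-- The inverse limit `lim← E^{<n_k}` along the truncation maps. -/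
def InvLim (G : DGraph) (n : ℕ → ℕ) : Type :=
  {f : (k : ℕ) → PathLt G (n k) // ∀ k, Path.trunc (n k) (f (k+1)).1 = (f k).1}

instance (G : DGraph) (n : ℕ → ℕ) : TopologicalSpace (InvLim G n) :=
  inferInstanceAs (TopologicalSpace
    {f : (k : ℕ) → PathLt G (n k) // ∀ k, Path.trunc (n k) (f (k+1)).1 = (f k).1})

noncomputable instance (G : DGraph) (n : ℕ → ℕ) : MeasurableSpace (InvLim G n) := borel _

end DGraph

namespace DGraph

variable {G : DGraph}

theorem Path.ext' {p q : G.Path} (hs : p.src = q.src) (he : p.edges = q.edges) : p = q := by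
  cases p; cases q
  simp only at hs he
  subst hs; subst he
  rfl

@[simp] theorem Path.src_cons (e : G.E) (p : G.Path) (h : p.rng = G.s e) :
    (Path.cons e p h).src = p.src := rfl

@[simp] theorem Path.edges_cons (e : G.E) (p : G.Path) (h : p.rng = G.s e) :
    (Path.cons e p h).edges = e :: p.edges := rfl

@[simp] theorem Path.rng_cons (e : G.E) (p : G.Path) (h : p.rng = G.s e) :
    (Path.cons e p h).rng = G.r e := rfl

@[simp] theorem Path.src_nil (v : G.V) : (Path.nil G v).src = v := rfl

@[simp] theorem Path.rng_nil (v : G.V) : (Path.nil G v).rng = v := rfl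

@[simp] theorem Path.src_append (p q : G.Path) (h : p.src = q.rng) :
    (p.append q h).src = q.src := rfl

@[simp] theorem Path.edges_append (p q : G.Path) (h : p.src = q.rng) :
    (p.append q h).edges = p.edges ++ q.edges := rfl

@[simp] theorem Path.length_append (p q : G.Path) (h : p.src = q.rng) :
    (p.append q h).length = p.length + q.length :=
  List.length_append

@[simp] theorem Path.rng_append (p q : G.Path) (h : p.src = q.rng) :
    (p.append q h).rng = p.rng := by
  cases hp : p.edges with
  | nil =>
    have h1 : p.rng = p.src := by simp [Path.rng, hp]
    simp [Path.rng, Path.append, hp, h1, h]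
  | cons a t => simp [Path.rng, Path.append, hp]

@[simp] theorem Path.src_tail (p : G.Path) : p.tail.src = p.src := rfl

theorem Path.eq_cons_tail {p : G.Path} {e : G.E} {rest : List G.E} (hp : p.edges = e :: rest) :
    ∃ h : p.tail.rng = G.s e, p = Path.cons e p.tail h := by
  have hte : p.tail.edges = rest := by simp [Path.tail, hp]
  have h : p.tail.rng = G.s e := by
    cases hr : rest with
    | nil =>
      have : G.s e = p.src := p.srcEq e (by simp [hp, hr])
      simp [Path.rng, hte, hr, this]
    | cons f t =>
      have hc := p.chain
      rw [hp, hr] at hc; unfold List.Chain' at hc; rw [List.isChain_cons_cons] at hc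
      simp [Path.rng, hte, hr, hc.1]
  exact ⟨h, Path.ext' rfl (by simp [hp, hte])⟩

/-- Remove the first `k` edges of a path. -/
def Path.drop (p : G.Path) (k : ℕ) : G.Path where
  src := p.src
  edges := p.edges.drop k
  chain := p.chain.drop k
  srcEq := by
    intro a ha
    apply p.srcEq
    cases hd : p.edges.drop k with
    | nil => rw [hd] at ha; simp at ha
    | cons f t =>
      obtain ⟨l₁, hl₁⟩ : ∃ l₁, l₁ ++ p.edges.drop k = p.edges :=
        ⟨p.edges.take k, List.take_append_drop k p.edges⟩
      rw [← hl₁, List.getLast?_append_of_ne_nil _ (by simp [hd])]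
      exact ha

@[simp] theorem Path.src_drop (p : G.Path) (k : ℕ) : (p.drop k).src = p.src := rfl

@[simp] theorem Path.length_drop (p : G.Path) (k : ℕ) :
    (p.drop k).length = p.length - k := List.length_drop

@[simp] theorem Path.length_take (p : G.Path) (k : ℕ) :
    (p.take k).length = min k p.length := List.length_take

@[simp] theorem Path.src_take_eq_rng_drop (p : G.Path) (k : ℕ) :
    (p.take k).src = (p.drop k).rng := rfl

theorem Path.take_append_drop' (p : G.Path) (k : ℕ) :
    p = (p.take k).append (p.drop k) (Path.src_take_eq_rng_drop p k) :=
  Path.ext' rfl (by simp [Path.take, Path.drop, Path.append])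

theorem Path.rng_take (p : G.Path) (k : ℕ) : (p.take k).rng = p.rng := by
  cases k with
  | zero => simp [Path.rng, Path.take]
  | succ m =>
    cases hp : p.edges with
    | nil => simp [Path.rng, Path.take, hp]
    | cons a t => simp [Path.rng, Path.take, hp]

end DGraph

namespace DGraph

variable {G : DGraph}

/-- In a strongly connected graph with no sources and a vertex, every vertex emits an edge. -/
theorem exists_src [Nonempty G.V] (hsc : StronglyConnected G) (hns : NoSources G) (v : G.V) :
    ∃ e : G.E, G.s e = v := by
  obtain ⟨v₀⟩ : Nonempty G.V := inferInstance
  obtain ⟨e₀, -⟩ := hns v₀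
  obtain ⟨p, hp1, hp2⟩ := hsc (G.s e₀) v
  cases hp : p.edges with
  | nil =>
    refine ⟨e₀, ?_⟩
    have : p.rng = p.src := by simp [Path.rng, hp]
    rw [hp2, hp1] at this
    exact this
  | cons a t =>
    refine ⟨(a :: t).getLast (by simp), ?_⟩
    rw [← hp1]
    exact p.srcEq _ (by rw [hp, List.getLast?_eq_getLast (by simp)]; rfl)

theorem cycle_dvd {P : ℕ} (hP : IsGCDOf P (CycleLengths G)) (c : G.Path) (h : c.rng = c.src) :
    (P : ℤ) ∣ (c.length : ℤ) := by
  by_cases hc : c.edges = []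
  · have : c.length = 0 := by simp [Path.length, hc]
    simp [this]
  · exact Int.natCast_dvd_natCast.mpr (hP.1 _ ⟨c, h, hc, rfl⟩)

/-- All paths with the same source and range have lengths congruent mod `P`. -/
theorem length_cong {P : ℕ} (hsc : StronglyConnected G) (hP : IsGCDOf P (CycleLengths G))
    {p q : G.Path} (hs : p.src = q.src) (hr : p.rng = q.rng) :
    (P : ℤ) ∣ (p.length : ℤ) - (q.length : ℤ) := by
  obtain ⟨r, hr1, hr2⟩ := hsc p.src p.rng
  have d1 : (P : ℤ) ∣ ((r.append p hr1).length : ℤ) :=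
    cycle_dvd hP _ (by rw [Path.rng_append, hr2, Path.src_append])
  have d2 : (P : ℤ) ∣ ((r.append q (hr1.trans hr)).length : ℤ) :=
    cycle_dvd hP _ (by rw [Path.rng_append, hr2, Path.src_append, ← hs])
  rw [Path.length_append] at d1 d2
  push_cast at d1 d2
  have h := dvd_sub d1 d2
  have heq : ((r.length : ℤ) + p.length) - ((r.length : ℤ) + q.length)
      = (p.length : ℤ) - q.length := by ring
  rwa [heq] at h

/-- Cycle pumping: a path whose length is divisible by `gcd P n` can be corrected to one
whose length is divisible by `n`. -/
theorem pump {P n : ℕ} (hn : 0 < n) (hsc : StronglyConnected G)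
    (hP : IsGCDOf P (CycleLengths G)) {v w : G.V} (p : G.Path)
    (hp1 : p.src = w) (hp2 : p.rng = v) (hdvd : Nat.gcd P n ∣ p.length) :
    ∃ q : G.Path, q.src = w ∧ q.rng = v ∧ n ∣ q.length := by
  haveI : NeZero n := ⟨hn.ne'⟩
  -- the subgroup of `ZMod n` of lengths of cycles at `w`
  have pow_cycle : ∀ (c : G.Path), c.src = w → c.rng = w → ∀ m : ℕ,
      ∃ c' : G.Path, c'.src = w ∧ c'.rng = w ∧ c'.length = m * c.length := by
    intro c hc1 hc2 m
    induction m with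
    | zero => exact ⟨Path.nil G w, rfl, rfl, by simp [Path.length, Path.nil]⟩
    | succ k ih =>
      obtain ⟨c', h1, h2, h3⟩ := ih
      refine ⟨c.append c' (hc1.trans h2.symm), by simp [h1], by simp [hc2], ?_⟩
      rw [Path.length_append, h3]; ring
  let H : AddSubgroup (ZMod n) :=
    { carrier := {x | ∃ c : G.Path, c.src = w ∧ c.rng = w ∧ ((c.length : ℕ) : ZMod n) = x}
      zero_mem' := ⟨Path.nil G w, rfl, rfl, by simp [Path.length, Path.nil]⟩
      add_mem' := by
        rintro x y ⟨c₁, h11, h12, h13⟩ ⟨c₂, h21, h22, h23⟩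
        refine ⟨c₁.append c₂ (h11.trans h22.symm), by simp [h21], by simp [h12], ?_⟩
        rw [Path.length_append]; push_cast; rw [h13, h23]
      neg_mem' := by
        rintro x ⟨c, h1, h2, h3⟩
        obtain ⟨c', h1', h2', h3'⟩ := pow_cycle c h1 h2 (n - 1)
        refine ⟨c', h1', h2', ?_⟩
        rw [h3']
        push_cast [Nat.cast_sub hn]
        rw [ZMod.natCast_self]
        rw [← h3]; ring }
  have Hcyc : ∀ k ∈ CycleLengths G, ((k : ℕ) : ZMod n) ∈ H := by
    rintro k ⟨c, hcr, -, hclen⟩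
    obtain ⟨g₁, hg11, hg12⟩ := hsc c.src w
    obtain ⟨g₂, hg21, hg22⟩ := hsc w c.src
    have memA : ((g₂.length + (c.length + g₁.length) : ℕ) : ZMod n) ∈ H := by
      refine ⟨g₂.append (c.append g₁ hg12.symm) (by simp [hg21, hcr]),
        by simp [hg11], by simp [hg22], ?_⟩
      simp [Path.length_append]
    have memB : ((g₂.length + g₁.length : ℕ) : ZMod n) ∈ H :=
      ⟨g₂.append g₁ (by rw [hg21, hg12]), by simp [hg11], by simp [hg22], by simp⟩
    have := H.sub_mem memA memB
    have heq : ((g₂.length + (c.length + g₁.length) : ℕ) : ZMod n)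
        - ((g₂.length + g₁.length : ℕ) : ZMod n) = ((k : ℕ) : ZMod n) := by
      push_cast
      rw [← hclen]; ring
    rwa [heq] at this
  have HP : ((P : ℕ) : ZMod n) ∈ H := by
    classical
    let K : AddSubgroup ℤ := AddSubgroup.comap (Int.castAddHom (ZMod n)) H
    obtain ⟨a, ha⟩ := Int.subgroup_cyclic K
    have hmem : ∀ k ∈ CycleLengths G, (k : ℤ) ∈ K := by
      intro k hk
      show ((k : ℤ) : ZMod n) ∈ H
      push_cast
      exact Hcyc k hk
    have hdvds : ∀ k ∈ CycleLengths G, a.natAbs ∣ k := by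
      intro k hk
      have := hmem k hk
      rw [ha, ← AddSubgroup.zmultiples_eq_closure, Int.mem_zmultiples_iff] at this
      simpa using Int.natAbs_dvd_natAbs.mpr this
    have haP : a ∣ (P : ℤ) := Int.natAbs_dvd.mp (Int.natCast_dvd_natCast.mpr (hP.2 _ hdvds))
    have : (P : ℤ) ∈ K := by
      rw [ha, ← AddSubgroup.zmultiples_eq_closure, Int.mem_zmultiples_iff]
      exact haP
    rw [AddSubgroup.mem_comap] at this
    simpa using this
  -- now find a cycle at w with length ≡ -p.length mod n
  have hl : ((p.length : ℕ) : ZMod n) ∈ H := by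
    obtain ⟨t, ht⟩ := hdvd
    have hbez := Nat.gcd_eq_gcd_ab P n
    have : ((p.length : ℕ) : ZMod n) = (Nat.gcdA P n * t) • ((P : ℕ) : ZMod n) := by
      have : (p.length : ℤ) = (P * Nat.gcdA P n + n * Nat.gcdB P n) * t := by
        rw [← hbez]; exact_mod_cast congrArg (fun x : ℕ => (x : ℤ)) ht
      calc ((p.length : ℕ) : ZMod n) = (((p.length : ℤ)) : ZMod n) := by push_cast; ring
        _ = (((P * Nat.gcdA P n + n * Nat.gcdB P n) * t : ℤ) : ZMod n) := by rw [this]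
        _ = (Nat.gcdA P n * t) • ((P : ℕ) : ZMod n) := by
            rw [zsmul_eq_mul]
            push_cast
            rw [ZMod.natCast_self]
            ring
    rw [this]
    exact H.zsmul_mem HP _
  obtain ⟨c, hc1, hc2, hc3⟩ := H.neg_mem hl
  refine ⟨p.append c (hp1.trans hc2.symm), by simp [hc1], by simp [hp2], ?_⟩
  have : (((p.append c (hp1.trans hc2.symm)).length : ℕ) : ZMod n) = 0 := by
    rw [Path.length_append]
    push_cast
    rw [hc3]
    ring
  exact (ZMod.natCast_eq_zero_iff _ _).mp this

end DGraph

namespace DGraph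

variable {G : DGraph}

theorem compOfPath {H : DGraph} (Q : H.Path) : Comp H Q.rng Q.src := by
  obtain ⟨L, hL⟩ : ∃ L, Q.edges = L := ⟨_, rfl⟩
  induction L generalizing Q with
  | nil =>
    have : Q.rng = Q.src := by simp [Path.rng, hL]
    rw [this]
    exact Relation.EqvGen.refl _
  | cons f t ih =>
    obtain ⟨h, hQ⟩ := Path.eq_cons_tail hL
    have h1 : Q.rng = H.r f := by rw [hQ, Path.rng_cons]
    have h2 : Q.src = Q.tail.src := rfl
    have htedges : Q.tail.edges = t := by simp [Path.tail, hL]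
    refine h1 ▸ h2 ▸ Relation.EqvGen.trans _ _ _
      (Relation.EqvGen.rel _ _ ⟨f, rfl, rfl⟩) (h ▸ ih Q.tail htedges)

theorem feed' {n : ℕ} (L : List G.E) (q : G.Path) (ν : PathLt G n) (h : q.src = ν.1.rng)
    (hq : q.edges = L) (hlen : q.length + ν.1.length < n) :
    ∃ Q : (Eln G n).Path, Q.src = ν ∧
      Q.rng = ⟨q.append ν.1 h, by rw [Path.length_append]; omega⟩ := by
  induction L generalizing q ν with
  | nil =>
    refine ⟨Path.nil _ ν, rfl, ?_⟩
    show ν = _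
    exact Subtype.ext (Path.ext' rfl (by simp [hq]))
  | cons e rest ih =>
    obtain ⟨htail, hQ⟩ := Path.eq_cons_tail hq
    have htedges : q.tail.edges = rest := by simp [Path.tail, hq]
    have hlq : q.length = q.tail.length + 1 := by simp [Path.length, Path.tail, hq]
    have h' : q.tail.src = ν.1.rng := h
    obtain ⟨Q', hQ'1, hQ'2⟩ := ih q.tail ν h' htedges (by omega)
    have hrng' : (q.tail.append ν.1 h').rng = G.s e := by rw [Path.rng_append]; exact htail
    have hlen' : (q.tail.append ν.1 h').length + 1 ≤ n := by
      rw [Path.length_append]; omega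
    set f : (Eln G n).E := ⟨(e, q.tail.append ν.1 h'), hlen', hrng'⟩ with hf
    have hsf : (Eln G n).s f = ⟨q.tail.append ν.1 h', by rw [Path.length_append]; omega⟩ :=
      Subtype.ext rfl
    have hc : Q'.rng = (Eln G n).s f := by rw [hQ'2, hsf]
    refine ⟨Path.cons f Q' hc, by rw [Path.src_cons]; exact hQ'1, ?_⟩
    rw [Path.rng_cons]
    have hlt : (q.tail.append ν.1 h').length + 1 < n := by
      rw [Path.length_append]; omega
    show (if h : _ then _ else _) = _
    erw [dif_pos hlt]
    refine Subtype.ext (Path.ext' rfl ?_)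
    simp [hq, htedges]
    exact ⟨rfl, by rw [← htedges]; rfl⟩

theorem feed'' {n : ℕ} (hn : 0 < n) (q : G.Path) (ν : PathLt G n) (h : q.src = ν.1.rng)
    (hlen : q.length + ν.1.length = n) (hne : q.edges ≠ []) :
    ∃ Q : (Eln G n).Path, Q.src = ν ∧ Q.rng = vtx G n hn q.rng := by
  obtain ⟨e, rest, hq⟩ : ∃ e rest, q.edges = e :: rest := by
    cases hq : q.edges with
    | nil => exact absurd hq hne
    | cons a t => exact ⟨a, t, rfl⟩
  obtain ⟨htail, hQ⟩ := Path.eq_cons_tail hq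
  have htedges : q.tail.edges = rest := by simp [Path.tail, hq]
  have hlq : q.length = q.tail.length + 1 := by simp [Path.length, Path.tail, hq]
  have h' : q.tail.src = ν.1.rng := h
  obtain ⟨Q', hQ'1, hQ'2⟩ := feed' rest q.tail ν h' htedges (by omega)
  have hrng' : (q.tail.append ν.1 h').rng = G.s e := by rw [Path.rng_append]; exact htail
  have hlen' : (q.tail.append ν.1 h').length + 1 ≤ n := by
    rw [Path.length_append]; omega
  set f : (Eln G n).E := ⟨(e, q.tail.append ν.1 h'), hlen', hrng'⟩ with hf
  have hsf : (Eln G n).s f = ⟨q.tail.append ν.1 h', by rw [Path.length_append]; omega⟩ :=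
    Subtype.ext rfl
  have hc : Q'.rng = (Eln G n).s f := by rw [hQ'2, hsf]
  refine ⟨Path.cons f Q' hc, by rw [Path.src_cons]; exact hQ'1, ?_⟩
  rw [Path.rng_cons]
  have hnlt : ¬ ((q.tail.append ν.1 h').length + 1 < n) := by
    rw [Path.length_append]; omega
  show (if h : _ then _ else _) = _
  erw [dif_neg hnlt]
  have hqr : q.rng = G.r e := by simp [Path.rng, hq]
  exact Subtype.ext (by rw [hqr]; rfl)

theorem reachSelf {n : ℕ} (hn : 0 < n) (ν : PathLt G n) :
    ∃ Q : (Eln G n).Path, Q.src = vtx G n hn ν.1.src ∧ Q.rng = ν := by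
  have h : ν.1.src = (vtx G n hn ν.1.src).1.rng := rfl
  obtain ⟨Q, h1, h2⟩ := feed' ν.1.edges ν.1 (vtx G n hn ν.1.src) h rfl
    (by simp [Path.length, Path.nil, vtx]; exact ν.2)
  refine ⟨Q, h1, ?_⟩
  rw [h2]
  exact Subtype.ext (Path.ext' rfl (by simp [Path.nil, vtx]))

theorem reachNil {n : ℕ} (hn : 0 < n) (hsrc : ∀ v, ∃ e : G.E, G.s e = v) (ν : PathLt G n) :
    ∃ (u : G.V) (Q : (Eln G n).Path), Q.src = ν ∧ Q.rng = vtx G n hn u := by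
  obtain ⟨m, hm⟩ : ∃ m, n - ν.1.length ≤ m := ⟨_, le_rfl⟩
  induction m generalizing ν with
  | zero => omega
  | succ k ih =>
    obtain ⟨e, he⟩ := hsrc ν.1.rng
    have hle : ν.1.length + 1 ≤ n := ν.2
    set f : (Eln G n).E := ⟨(e, ν.1), hle, he.symm⟩ with hf
    have hsf : (Eln G n).s f = ν := Subtype.ext rfl
    by_cases hlt : ν.1.length + 1 < n
    · have hrf : (Eln G n).r f = ⟨Path.cons e ν.1 he.symm, by simpa using hlt⟩ := by
        show (if h : _ then _ else _) = _
        erw [dif_pos hlt]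
      obtain ⟨u, Q₂, hq1, hq2⟩ := ih ⟨Path.cons e ν.1 he.symm, by simpa using hlt⟩
        (by simp only [Path.length_cons]; omega)
      have hS : ((Path.cons f (Path.nil _ ν) (by rw [hsf]; rfl)) : (Eln G n).Path).rng
          = ⟨Path.cons e ν.1 he.symm, by simpa using hlt⟩ := by
        rw [Path.rng_cons, hrf]
      have hcomp : Q₂.src = ((Path.cons f (Path.nil _ ν) (by rw [hsf]; rfl)) : (Eln G n).Path).rng := by
        rw [hq1, hS]
      exact ⟨u, Q₂.append _ hcomp, by simp; rfl, by simp [hq2]; rfl⟩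
    · have hrf : (Eln G n).r f = vtx G n hn (G.r e) := by
        show (if h : _ then _ else _) = _
        erw [dif_neg hlt]
        rfl
      refine ⟨G.r e, Path.cons f (Path.nil _ ν) (by rw [hsf]; rfl), by simp; rfl, ?_⟩
      rw [Path.rng_cons, hrf]

end DGraph

namespace DGraph

variable {G : DGraph}

theorem reachBlocks {n : ℕ} (hn : 0 < n) (q : G.Path) (hdvd : n ∣ q.length) :
    ∃ Q : (Eln G n).Path, Q.src = vtx G n hn q.src ∧ Q.rng = vtx G n hn q.rng := by
  obtain ⟨ℓ, hℓ⟩ : ∃ ℓ, q.length = ℓ := ⟨_, rfl⟩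
  induction ℓ using Nat.strong_induction_on generalizing q with
  | _ ℓ ih =>
  by_cases h0 : q.length = 0
  · have hedges : q.edges = [] := List.length_eq_zero_iff.mp h0
    have hrs : q.rng = q.src := by simp [Path.rng, hedges]
    exact ⟨Path.nil _ _, rfl, by rw [hrs]; rfl⟩
  · have hnle : n ≤ q.length := Nat.le_of_dvd (Nat.pos_of_ne_zero h0) hdvd
    set k := q.length - n with hk
    have hdropk : (q.drop k).length = n := by rw [Path.length_drop]; omega
    have hdne : (q.drop k).edges ≠ [] := by
      intro hcon
      have : (q.drop k).length = 0 := by simp [Path.length, hcon]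
      omega
    obtain ⟨Q₁, hA1, hA2⟩ := feed'' hn (q.drop k) (vtx G n hn q.src) rfl
      (by rw [hdropk]; simp [vtx, Path.length, Path.nil]) hdne
    have htk : (q.take k).length = k := by rw [Path.length_take]; omega
    have hkdvd : n ∣ k := Nat.dvd_sub hdvd dvd_rfl
    obtain ⟨Q₂, hB1, hB2⟩ := ih k (by omega) (q.take k) (by rw [htk]; exact hkdvd) htk
    have hcomp : Q₂.src = Q₁.rng := by
      rw [hB1, hA2]
      rfl
    refine ⟨Q₂.append Q₁ hcomp, by simp [hA1]; rfl, ?_⟩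
    rw [Path.rng_append, hB2, Path.rng_take]

end DGraph
open DGraph in
/-- Let `E` be a strongly connected finite directed graph with no sources
and `n ≥ 1`.  Two vertices `v, w` of `E` lie in the same connected component of `E(n)` iff
`v ∼_n w` (there is a path from `w` to `v` of length divisible by `gcd(P_E, n)`); each
component of `E(n)` is strongly connected; and `E(n)` is strongly connected iff
`gcd(P_E, n) = 1`. -/
theorem Eln_components (G : DGraph) [Finite G.V] [Finite G.E] [Nonempty G.V]
    (hsc : StronglyConnected G) (hns : NoSources G)
    (n : ℕ) (hn : 0 < n) (P : ℕ) (hP : IsGCDOf P (CycleLengths G)) :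
    (∀ v w : G.V, Comp (Eln G n) (vtx G n hn v) (vtx G n hn w) ↔ SimRel G (Nat.gcd P n) v w) ∧
    (∀ p q : (Eln G n).V, Comp (Eln G n) p q →
      ∃ Q : Path (Eln G n), Q.src = q ∧ Q.rng = p) ∧
    (StronglyConnected (Eln G n) ↔ Nat.gcd P n = 1) := by
  classical
  set d := Nat.gcd P n with hd
  have hdP : d ∣ P := Nat.gcd_dvd_left _ _
  have hdn : d ∣ n := Nat.gcd_dvd_right _ _
  have hdpos : 0 < d := Nat.gcd_pos_of_pos_right _ hn
  haveI : NeZero d := ⟨hdpos.ne'⟩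
  obtain ⟨v₀⟩ : Nonempty G.V := inferInstance
  choose pth hpsrc hprng using fun v => hsc v v₀
  set δ : G.V → ℕ := fun v => (pth v).length with hδ
  -- congruences of δ modulo d
  have hzer : ∀ a : ℤ, (d : ℤ) ∣ a → ((a : ZMod d) = 0) :=
    fun a ha => (ZMod.intCast_zmod_eq_zero_iff_dvd a d).mpr ha
  have hstep : ∀ e : G.E, ((δ (G.r e) : ℤ) : ZMod d) = ((δ (G.s e) : ℤ) : ZMod d) + 1 := by
    intro e
    have hcong := length_cong hsc hP (p := pth (G.r e))
      (q := Path.cons e (pth (G.s e)) (hprng (G.s e)))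
      (by rw [hpsrc, Path.src_cons, hpsrc]) (by rw [hprng, Path.rng_cons])
    rw [Path.length_cons] at hcong
    have h2 : (d : ℤ) ∣ ((δ (G.r e) : ℤ) - ((δ (G.s e) : ℤ) + 1)) := by
      refine dvd_trans (Int.natCast_dvd_natCast.mpr hdP) ?_
      push_cast at hcong ⊢
      convert hcong using 1
    have h3 := hzer _ h2
    push_cast at h3 ⊢
    linear_combination h3
  set φ : (Eln G n).V → ZMod d :=
    fun μ => ((δ (μ.1.rng) : ℤ) : ZMod d) - ((μ.1.length : ℤ) : ZMod d) with hφ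
  have hφinv : ∀ f : (Eln G n).E, φ ((Eln G n).r f) = φ ((Eln G n).s f) := by
    rintro ⟨⟨e, μ⟩, hle, hrng⟩
    have hsφ : φ ((Eln G n).s ⟨(e, μ), hle, hrng⟩)
        = ((δ (μ.rng) : ℤ) : ZMod d) - ((μ.length : ℤ) : ZMod d) := rfl
    rw [hsφ]
    by_cases hlt : μ.length + 1 < n
    · have hr : (Eln G n).r ⟨(e, μ), hle, hrng⟩
          = ⟨Path.cons e μ hrng, by simpa using hlt⟩ := by
        show (if h : _ then _ else _) = _
        erw [dif_pos hlt]
      rw [hr]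
      have : φ ⟨Path.cons e μ hrng, by simpa using hlt⟩
          = ((δ (G.r e) : ℤ) : ZMod d) - (((μ.length + 1 : ℕ) : ℤ) : ZMod d) := by
        simp [hφ, Path.rng_cons, Path.length_cons]
      rw [this, hstep e, hrng]
      push_cast
      ring
    · have hr : (Eln G n).r ⟨(e, μ), hle, hrng⟩ = vtx G n hn (G.r e) := by
        show (if h : _ then _ else _) = _
        erw [dif_neg hlt]
        rfl
      rw [hr]
      have hle' : μ.length + 1 ≤ n := hle
      have hμn : μ.length + 1 = n := by omega
      have : φ (vtx G n hn (G.r e)) = ((δ (G.r e) : ℤ) : ZMod d) := by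
        simp [hφ, vtx, Path.rng, Path.length, Path.nil]
      rw [this, hstep e, hrng]
      have hn0 : ((n : ℤ) : ZMod d) = 0 := hzer _ (Int.natCast_dvd_natCast.mpr hdn)
      have : ((μ.length : ℤ) : ZMod d) = -1 := by
        have : ((μ.length : ℤ) : ZMod d) = ((n : ℤ) : ZMod d) - 1 := by
          rw [← hμn]; push_cast; ring
        rw [this, hn0]; ring
      rw [this]
      ring
  have hcompφ : ∀ a b, Comp (Eln G n) a b → φ a = φ b := by
    intro a b h
    induction h with
    | rel x y hxy =>
      obtain ⟨f, h1, h2⟩ := hxy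
      rw [← h1, ← h2]
      exact hφinv f
    | refl => rfl
    | symm _ _ _ ih => exact ih.symm
    | trans _ _ _ _ _ ih1 ih2 => exact ih1.trans ih2
  have hφvtx : ∀ v : G.V, φ (vtx G n hn v) = ((δ v : ℤ) : ZMod d) := by
    intro v
    simp [hφ, vtx, Path.rng, Path.length, Path.nil]
  -- Part 1
  have part1 : ∀ v w : G.V,
      Comp (Eln G n) (vtx G n hn v) (vtx G n hn w) ↔ SimRel G d v w := by
    intro v w
    constructor
    · intro h
      have hφvw := hcompφ _ _ h
      rw [hφvtx, hφvtx] at hφvw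
      obtain ⟨p, hp1, hp2⟩ := hsc v w
      refine ⟨p, hp1, hp2, ?_⟩
      have hcong := length_cong hsc hP
        (p := p.append (pth w) (by rw [hp1, hprng])) (q := pth v)
        (by simp [hpsrc]) (by simp [hp2, hprng])
      rw [Path.length_append] at hcong
      have h1 : (d : ℤ) ∣ ((p.length : ℤ) + (δ w : ℤ)) - (δ v : ℤ) := by
        refine dvd_trans (Int.natCast_dvd_natCast.mpr hdP) ?_
        push_cast at hcong ⊢
        convert hcong using 1
      have h2 : (d : ℤ) ∣ ((δ v : ℤ) - (δ w : ℤ)) := by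
        rw [← ZMod.intCast_zmod_eq_zero_iff_dvd]
        push_cast
        rw [sub_eq_zero]
        exact_mod_cast hφvw
      have h3 : (d : ℤ) ∣ (p.length : ℤ) := by
        have : (p.length : ℤ) = (((p.length : ℤ) + (δ w : ℤ)) - (δ v : ℤ))
            + ((δ v : ℤ) - (δ w : ℤ)) := by ring
        rw [this]
        exact dvd_add h1 h2
      exact_mod_cast h3
    · rintro ⟨p, hp1, hp2, hp3⟩
      obtain ⟨q2, h1, h2, h3⟩ := pump hn hsc hP p hp1 hp2 hp3
      obtain ⟨Q, hQ1, hQ2⟩ := reachBlocks hn q2 h3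
      rw [h1] at hQ1
      rw [h2] at hQ2
      have := compOfPath Q
      rwa [hQ1, hQ2] at this
  refine ⟨part1, ?_, ?_⟩
  -- Part 2
  · intro p q hcomp
    obtain ⟨u, Q₁, hA1, hA2⟩ := reachNil hn (exists_src hsc hns) q
    obtain ⟨Q₃, hC1, hC2⟩ := reachSelf hn p
    have c1 : Comp (Eln G n) (vtx G n hn p.1.src) (vtx G n hn u) := by
      have k3 := compOfPath Q₃
      rw [hC1, hC2] at k3
      have k1 := compOfPath Q₁
      rw [hA1, hA2] at k1
      exact Relation.EqvGen.trans _ _ _ (Relation.EqvGen.symm _ _ k3)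
        (Relation.EqvGen.trans _ _ _ hcomp (Relation.EqvGen.symm _ _ k1))
    obtain ⟨c, hc1, hc2, hc3⟩ := (part1 _ _).mp c1
    obtain ⟨q2, h1, h2, h3⟩ := pump hn hsc hP c hc1 hc2 hc3
    obtain ⟨Q₂, hB1, hB2⟩ := reachBlocks hn q2 h3
    rw [h1] at hB1
    rw [h2] at hB2
    refine ⟨Q₃.append (Q₂.append Q₁ (by rw [hB1, hA2])) (by rw [hC1, Path.rng_append, hB2]),
      ?_, ?_⟩
    · simp [hA1]
    · simp [hC2]
  -- Part 3
  · constructor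
    · intro hscE
      obtain ⟨e, -⟩ := hns v₀
      obtain ⟨Q, hQ1, hQ2⟩ := hscE (vtx G n hn (G.r e)) (vtx G n hn (G.s e))
      have hcomp := compOfPath Q
      rw [hQ1, hQ2] at hcomp
      obtain ⟨c, hc1, hc2, hc3⟩ := (part1 _ _).mp hcomp
      have hcong := length_cong hsc hP
        (p := Path.cons e (Path.nil G (G.s e)) rfl) (q := c)
        (by rw [hc1]; rfl) (by rw [hc2]; rfl)
      change (P : ℤ) ∣ ((0 + 1 : ℕ) : ℤ) - (c.length : ℤ) at hcong
      have hdc : (d : ℤ) ∣ (c.length : ℤ) := Int.natCast_dvd_natCast.mpr hc3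
      have hd1 : (d : ℤ) ∣ 1 := by
        have h4 : (d : ℤ) ∣ ((0 + 1 : ℕ) : ℤ) - (c.length : ℤ) :=
          dvd_trans (Int.natCast_dvd_natCast.mpr hdP) hcong
        have : (1 : ℤ) = (((0 + 1 : ℕ) : ℤ) - (c.length : ℤ)) + (c.length : ℤ) := by
          push_cast
          ring
        rw [this]
        exact dvd_add h4 hdc
      have : d ∣ 1 := by exact_mod_cast hd1
      exact Nat.dvd_one.mp this
    · intro hd1 μ ν
      obtain ⟨u, Q₁, hA1, hA2⟩ := reachNil hn (exists_src hsc hns) ν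
      obtain ⟨Q₃, hC1, hC2⟩ := reachSelf hn μ
      obtain ⟨c, hc1, hc2⟩ := hsc μ.1.src u
      obtain ⟨q2, h1, h2, h3⟩ := pump hn hsc hP c hc1 hc2 (by rw [← hd, hd1]; exact one_dvd _)
      obtain ⟨Q₂, hB1, hB2⟩ := reachBlocks hn q2 h3
      rw [h1] at hB1
      rw [h2] at hB2
      refine ⟨Q₃.append (Q₂.append Q₁ (by rw [hB1, hA2])) (by rw [hC1, Path.rng_append, hB2]),
        ?_, ?_⟩
      · simp [hA1]
      · simp [hC2]
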